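/- arXiv:1705.00934 — 2 statements merged into one kernel-verified Lean document; each statement's English description precedes it below -/
import Mathlib

section
/- (Lemma on saddle point systems, primal part.) For every vector f ∈ ℝ^{r·n_v}, the vector v̄ := (I_r ⊗ θ_r) · 𝒳⁻¹ · (I_r ⊗ φ_lᵀ) · f solves the saddle point problem: there exists ξ_v ∈ ℝ^{r·n_p} such that 𝒯 v̄ + (I_r ⊗ A12) ξ_v = f and (I_r ⊗ A21) v̄ = 0. -/
open Matrix Kronecker

theorem saddle_point_primal (n_v n_p r : ℕ) (hnv : 0 < n_v) (hnp : 0 < n_p) (hr : 0 < r)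
    (hnp_le : n_p ≤ n_v)
    (A12 : Matrix (Fin n_v) (Fin n_p) ℝ)
    (A21 : Matrix (Fin n_p) (Fin n_v) ℝ)
    (φl θr : Matrix (Fin n_v) (Fin (n_v - n_p)) ℝ)
    (hθ : A21 * θr = 0)
    (hφ : LinearMap.ker φl.transpose.mulVecLin ≤ LinearMap.range A12.mulVecLin)
    (T : Matrix (Fin r × Fin n_v) (Fin r × Fin n_v) ℝ)
    (X : Matrix (Fin r × Fin (n_v - n_p)) (Fin r × Fin (n_v - n_p)) ℝ)
    (hX : X = ((1 : Matrix (Fin r) (Fin r) ℝ) ⊗ₖ φl.transpose) * T *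
      ((1 : Matrix (Fin r) (Fin r) ℝ) ⊗ₖ θr))
    (hXunit : IsUnit X)
    (f : Fin r × Fin n_v → ℝ) :
    ∃ ξv : Fin r × Fin n_p → ℝ,
      T.mulVec ((((1 : Matrix (Fin r) (Fin r) ℝ) ⊗ₖ θr) * X⁻¹ *
          ((1 : Matrix (Fin r) (Fin r) ℝ) ⊗ₖ φl.transpose)).mulVec f) +
        (((1 : Matrix (Fin r) (Fin r) ℝ) ⊗ₖ A12).mulVec ξv) = f ∧
      (((1 : Matrix (Fin r) (Fin r) ℝ) ⊗ₖ A21)).mulVec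
        ((((1 : Matrix (Fin r) (Fin r) ℝ) ⊗ₖ θr) * X⁻¹ *
          ((1 : Matrix (Fin r) (Fin r) ℝ) ⊗ₖ φl.transpose)).mulVec f) = 0 := by
  set Iφ : Matrix (Fin r × Fin (n_v - n_p)) (Fin r × Fin n_v) ℝ :=
    (1 : Matrix (Fin r) (Fin r) ℝ) ⊗ₖ φl.transpose with hIφ
  set Iθ : Matrix (Fin r × Fin n_v) (Fin r × Fin (n_v - n_p)) ℝ :=
    (1 : Matrix (Fin r) (Fin r) ℝ) ⊗ₖ θr with hIθ
  set v : Fin r × Fin n_v → ℝ := (Iθ * X⁻¹ * Iφ).mulVec f with hv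
  have hdet : IsUnit X.det := X.isUnit_iff_isUnit_det.mp hXunit
  have hXinv : X * X⁻¹ = 1 := Matrix.mul_nonsing_inv X hdet
  set g : Fin r × Fin n_v → ℝ := f - T.mulVec v with hg
  have key : Iφ * T * (Iθ * X⁻¹ * Iφ) = Iφ := by
    have h1 : Iφ * T * (Iθ * X⁻¹ * Iφ) = (Iφ * T * Iθ) * X⁻¹ * Iφ := by
      simp only [Matrix.mul_assoc]
    rw [h1, ← hX, hXinv, Matrix.one_mul]
  have hker : Iφ.mulVec g = 0 := by
    have h1 : Iφ.mulVec (T.mulVec v) = Iφ.mulVec f := by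
      rw [hv, Matrix.mulVec_mulVec, Matrix.mulVec_mulVec, key]
    rw [hg, Matrix.mulVec_sub, h1, sub_self]
  have hslice : ∀ i : Fin r, ∃ ξ : Fin n_p → ℝ,
      A12.mulVec ξ = fun k => g (i, k) := by
    intro i
    have hk : φl.transpose.mulVec (fun k => g (i, k)) = 0 := by
      funext j
      have h2 := congrFun hker (i, j)
      simp only [Matrix.mulVec, dotProduct, Pi.zero_apply] at h2 ⊢
      rw [← h2, Fintype.sum_prod_type]
      simp [hIφ, Matrix.one_apply, Finset.sum_ite_eq, ite_mul]
    have hm : (fun k => g (i, k)) ∈ LinearMap.ker φl.transpose.mulVecLin := by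
      rw [LinearMap.mem_ker, Matrix.mulVecLin_apply]; exact hk
    obtain ⟨ξ, hξ⟩ := hφ hm
    rw [Matrix.mulVecLin_apply] at hξ
    exact ⟨ξ, hξ⟩
  choose ξ hξ using hslice
  refine ⟨fun ip => ξ ip.1 ip.2, ?_, ?_⟩
  · have hA : ((1 : Matrix (Fin r) (Fin r) ℝ) ⊗ₖ A12).mulVec (fun ip => ξ ip.1 ip.2) = g := by
      funext ij
      obtain ⟨i, j⟩ := ij
      have h3 := congrFun (hξ i) j
      simp only [Matrix.mulVec, dotProduct] at h3 ⊢
      rw [← h3, Fintype.sum_prod_type]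
      simp [Matrix.one_apply, Finset.sum_ite_eq, ite_mul]
    rw [hA, hg]
    abel
  · rw [hv, Matrix.mulVec_mulVec]
    have h0 : ((1 : Matrix (Fin r) (Fin r) ℝ) ⊗ₖ A21) * Iθ = 0 := by
      rw [hIθ, ← Matrix.mul_kronecker_mul, Matrix.one_mul, hθ]
      simp
    have h4 : ((1 : Matrix (Fin r) (Fin r) ℝ) ⊗ₖ A21) * (Iθ * X⁻¹ * Iφ) = 0 := by
      rw [show Iθ * X⁻¹ * Iφ = Iθ * (X⁻¹ * Iφ) from by rw [Matrix.mul_assoc],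
        ← Matrix.mul_assoc, h0, Matrix.zero_mul]
    rw [h4, Matrix.zero_mulVec]
end

section
/- (Lemma on saddle point systems, dual part.) For every vector g ∈ ℝ^{r·n_v}, the vector w̄ := (I_r ⊗ φ_l) · (𝒳ᵀ)⁻¹ · (I_r ⊗ θ_rᵀ) · g solves the dual saddle point problem: there exists ξ_w ∈ ℝ^{r·n_p} such that 𝒯ᵀ w̄ + (I_r ⊗ A21ᵀ) ξ_w = g and (I_r ⊗ A12ᵀ) w̄ = 0. -/
open Matrix Kronecker

lemma kron_slice {m n : Type*} [Fintype m] [Fintype n] [DecidableEq m] {r : ℕ}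
    (M : Matrix m n ℝ) (v : Fin r × n → ℝ) (i : Fin r) (j : m) :
    ((1 ⊗ₖ M).mulVec v) (i, j) = M.mulVec (fun j' => v (i, j')) j := by
  simp [Matrix.mulVec, dotProduct, Fintype.sum_prod_type, Matrix.one_apply, ite_mul, mul_ite]

theorem saddle_point_dual (n_v n_p r : ℕ) (hnv : 0 < n_v) (hnp : 0 < n_p) (hr : 0 < r)
    (hnp_le : n_p ≤ n_v)
    (A12 : Matrix (Fin n_v) (Fin n_p) ℝ)
    (A21 : Matrix (Fin n_p) (Fin n_v) ℝ)
    (φl θr : Matrix (Fin n_v) (Fin (n_v - n_p)) ℝ)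
    (hφ : φl.transpose * A12 = 0)
    (hθ : LinearMap.ker θr.transpose.mulVecLin ≤ LinearMap.range A21.transpose.mulVecLin)
    (T : Matrix (Fin r × Fin n_v) (Fin r × Fin n_v) ℝ)
    (X : Matrix (Fin r × Fin (n_v - n_p)) (Fin r × Fin (n_v - n_p)) ℝ)
    (hX : X = ((1 : Matrix (Fin r) (Fin r) ℝ) ⊗ₖ φl.transpose) * T *
      ((1 : Matrix (Fin r) (Fin r) ℝ) ⊗ₖ θr))
    (hXunit : IsUnit X)
    (g : Fin r × Fin n_v → ℝ) :
    ∃ ξw : Fin r × Fin n_p → ℝ,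
      T.transpose.mulVec ((((1 : Matrix (Fin r) (Fin r) ℝ) ⊗ₖ φl) * (X.transpose)⁻¹ *
          ((1 : Matrix (Fin r) (Fin r) ℝ) ⊗ₖ θr.transpose)).mulVec g) +
        (((1 : Matrix (Fin r) (Fin r) ℝ) ⊗ₖ A21.transpose).mulVec ξw) = g ∧
      (((1 : Matrix (Fin r) (Fin r) ℝ) ⊗ₖ A12.transpose)).mulVec
        ((((1 : Matrix (Fin r) (Fin r) ℝ) ⊗ₖ φl) * (X.transpose)⁻¹ *
          ((1 : Matrix (Fin r) (Fin r) ℝ) ⊗ₖ θr.transpose)).mulVec g) = 0 := by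
  set P := (((1 : Matrix (Fin r) (Fin r) ℝ) ⊗ₖ φl) * (X.transpose)⁻¹ *
      ((1 : Matrix (Fin r) (Fin r) ℝ) ⊗ₖ θr.transpose)) with hP
  have hdet : IsUnit X.transpose.det := by
    rw [Matrix.det_transpose]; exact (Matrix.isUnit_iff_isUnit_det X).mp hXunit
  have hXT : X.transpose = ((1 : Matrix (Fin r) (Fin r) ℝ) ⊗ₖ θr.transpose) * T.transpose *
      ((1 : Matrix (Fin r) (Fin r) ℝ) ⊗ₖ φl) := by
    rw [hX, Matrix.transpose_mul, Matrix.transpose_mul,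
      ← Matrix.kroneckerMap_transpose, ← Matrix.kroneckerMap_transpose,
      Matrix.transpose_one, Matrix.transpose_transpose, Matrix.mul_assoc]
  -- second claim
  have h2 : ((1 : Matrix (Fin r) (Fin r) ℝ) ⊗ₖ A12.transpose) * P = 0 := by
    have : ((1 : Matrix (Fin r) (Fin r) ℝ) ⊗ₖ A12.transpose) *
        ((1 : Matrix (Fin r) (Fin r) ℝ) ⊗ₖ φl) = 0 := by
      rw [← Matrix.mul_kronecker_mul]
      have : A12.transpose * φl = 0 := by
        have := congrArg Matrix.transpose hφ
        simpa using this
      simp [this]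
    rw [hP, ← Matrix.mul_assoc, ← Matrix.mul_assoc, this]
    simp
  -- the residual is in the kernel of 1 ⊗ θrᵀ
  set s : Fin r × Fin n_v → ℝ := g - T.transpose.mulVec (P.mulVec g) with hs
  have hker : ((1 : Matrix (Fin r) (Fin r) ℝ) ⊗ₖ θr.transpose).mulVec s = 0 := by
    have key : ((1 : Matrix (Fin r) (Fin r) ℝ) ⊗ₖ θr.transpose) * (T.transpose * P) =
        ((1 : Matrix (Fin r) (Fin r) ℝ) ⊗ₖ θr.transpose) := by
      calc ((1 : Matrix (Fin r) (Fin r) ℝ) ⊗ₖ θr.transpose) * (T.transpose * P)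
          = (((1 : Matrix (Fin r) (Fin r) ℝ) ⊗ₖ θr.transpose) * T.transpose *
              ((1 : Matrix (Fin r) (Fin r) ℝ) ⊗ₖ φl)) * ((X.transpose)⁻¹ *
              ((1 : Matrix (Fin r) (Fin r) ℝ) ⊗ₖ θr.transpose)) := by
            rw [hP]; simp only [Matrix.mul_assoc]
        _ = X.transpose * (X.transpose)⁻¹ * ((1 : Matrix (Fin r) (Fin r) ℝ) ⊗ₖ θr.transpose) := by
            rw [← hXT, Matrix.mul_assoc]
        _ = ((1 : Matrix (Fin r) (Fin r) ℝ) ⊗ₖ θr.transpose) := by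
            rw [Matrix.mul_nonsing_inv _ hdet, Matrix.one_mul]
    have e1 : ((1 : Matrix (Fin r) (Fin r) ℝ) ⊗ₖ θr.transpose).mulVec s =
        ((1 : Matrix (Fin r) (Fin r) ℝ) ⊗ₖ θr.transpose).mulVec g -
        (((1 : Matrix (Fin r) (Fin r) ℝ) ⊗ₖ θr.transpose) * (T.transpose * P)).mulVec g := by
      rw [hs, Matrix.mulVec_sub, Matrix.mulVec_mulVec, Matrix.mulVec_mulVec, Matrix.mul_assoc]
    rw [e1, key, sub_self]
  -- blockwise solve
  have hblock : ∀ i : Fin r, ∃ ξ : Fin n_p → ℝ,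
      A21.transpose.mulVec ξ = fun j => s (i, j) := by
    intro i
    have : θr.transpose.mulVec (fun j => s (i, j)) = 0 := by
      funext j
      have := congrFun hker (i, j)
      rw [kron_slice] at this
      simpa using this
    have hmem : (fun j => s (i, j)) ∈ LinearMap.ker θr.transpose.mulVecLin := by
      rw [LinearMap.mem_ker, Matrix.mulVecLin_apply]
      exact this
    obtain ⟨ξ, hξ⟩ := hθ hmem
    rw [Matrix.mulVecLin_apply] at hξ
    exact ⟨ξ, hξ⟩
  choose ξ hξ using hblock
  refine ⟨fun p => ξ p.1 p.2, ?_, ?_⟩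
  · funext p
    obtain ⟨i, j⟩ := p
    have h1 : (((1 : Matrix (Fin r) (Fin r) ℝ) ⊗ₖ A21.transpose).mulVec
        (fun p => ξ p.1 p.2)) (i, j) = s (i, j) := by
      rw [kron_slice]
      have := congrFun (hξ i) j
      simpa using this
    have : s (i, j) = g (i, j) - T.transpose.mulVec (P.mulVec g) (i, j) := by
      rw [hs]; simp
    simp only [Pi.add_apply, h1, this]
    ring
  · rw [Matrix.mulVec_mulVec, h2]
    simp
end
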